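/- The operator X shifts the parameter α of U_n by one: for every integer n with 0 ≤ n ≤ N and every integer x, (x − α) U_n(x;α,β,N) − x U_n(x−1;α,β,N) = −α · U_n(x;α+1,β,N). -/

import Mathlib

/-- Pochhammer symbol `(a)_k = a (a+1) ⋯ (a+k-1)`, with `(a)_0 = 1`. -/
noncomputable def poch (a : ℝ) (k : ℕ) : ℝ := ∏ i ∈ Finset.range k, (a + (i : ℝ))

/-- The rational function of Hahn type `U_n(x;α,β,N)`. -/
noncomputable def U (α β : ℝ) (N n : ℕ) (x : ℤ) : ℝ :=
  ((-1 : ℝ) ^ n * poch (-(N : ℝ)) n / poch (β + 1) n) *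
    ∑ k ∈ Finset.range (n + 1),
      poch (-(x : ℝ)) k * poch (-(n : ℝ)) k * poch (β + (n : ℝ) - (N : ℝ)) k /
        ((Nat.factorial k : ℝ) * poch (-(N : ℝ)) k * poch (α - (x : ℝ)) k)

lemma poch_succ (a : ℝ) (k : ℕ) : poch a (k+1) = poch a k * (a + k) := by
  simp [poch, Finset.prod_range_succ]

lemma poch_succ' (a : ℝ) (k : ℕ) : poch a (k+1) = a * poch (a+1) k := by
  simp only [poch]
  rw [Finset.prod_range_succ', mul_comm]
  simp [add_assoc, add_comm (1:ℝ)]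

lemma poch_ne_zero {a : ℝ} (h : ∀ i : ℕ, a + i ≠ 0) (k : ℕ) : poch a k ≠ 0 :=
  Finset.prod_ne_zero_iff.mpr fun i _ => h i

lemma key (α : ℝ) (hα : ∀ m : ℤ, α ≠ (m : ℝ)) (x : ℤ) (k : ℕ) :
    ((x:ℝ) - α) * (poch (-(x:ℝ)) k / poch (α - x) k)
      - (x:ℝ) * (poch (1 - (x:ℝ)) k / poch (α - x + 1) k)
      = -α * (poch (-(x:ℝ)) k / poch (α + 1 - x) k) := by
  have h1 : ∀ i : ℕ, α - x + i ≠ 0 := by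
    intro i h
    exact hα (x - i) (by push_cast; linarith)
  have h2 : ∀ i : ℕ, α - x + 1 + i ≠ 0 := by
    intro i h
    exact hα (x - 1 - i) (by push_cast; linarith)
  have f1 : poch (α - x) k ≠ 0 := poch_ne_zero h1 k
  have f2 : poch (α - x + 1) k ≠ 0 := poch_ne_zero h2 k
  have hax : α - (x:ℝ) ≠ 0 := by simpa using h1 0
  have R1 : poch (-(x:ℝ)) k * (-(x:ℝ) + k) = (-(x:ℝ)) * poch (1 - x) k := by
    rw [← poch_succ, poch_succ']
    rw [show (-(x:ℝ) + 1) = 1 - x by ring]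
  have R2 : poch (α - x) k * (α - x + k) = (α - x) * poch (α - x + 1) k := by
    rw [← poch_succ, poch_succ']
  rw [show α + 1 - (x:ℝ) = α - x + 1 by ring]
  set A := poch (-(x:ℝ)) k with hA
  set B := poch (1 - (x:ℝ)) k with hB
  set C := poch (α - x) k with hC
  set D := poch (α - x + 1) k with hD
  field_simp
  linear_combination (-C) * R1 + A * R2

theorem statement6 (N : ℕ) (hN : 0 < N) (α β : ℝ)
    (hα : ∀ m : ℤ, α ≠ (m : ℝ)) (hβ : ∀ m : ℤ, β ≠ (m : ℝ))
    (n : ℕ) (hn : n ≤ N) (x : ℤ) :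
    ((x : ℝ) - α) * U α β N n x - (x : ℝ) * U α β N n (x - 1)
      = -α * U (α + 1) β N n x := by
  have hx1 : ((x - 1 : ℤ) : ℝ) = (x:ℝ) - 1 := by push_cast; ring
  have e1 : -((x:ℝ) - 1) = 1 - (x:ℝ) := by ring
  have e2 : α - ((x:ℝ) - 1) = α - (x:ℝ) + 1 := by ring
  have e3 : α + 1 - (x:ℝ) = α - (x:ℝ) + 1 := by ring
  simp only [U, hx1, e1, e2, e3]
  have h : ∀ k ∈ Finset.range (n+1),
      ((x:ℝ) - α) * (poch (-(x:ℝ)) k * poch (-(n:ℝ)) k * poch (β + (n:ℝ) - (N:ℝ)) k /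
          ((Nat.factorial k : ℝ) * poch (-(N:ℝ)) k * poch (α - (x:ℝ)) k))
        - (x:ℝ) * (poch (1 - (x:ℝ)) k * poch (-(n:ℝ)) k * poch (β + (n:ℝ) - (N:ℝ)) k /
          ((Nat.factorial k : ℝ) * poch (-(N:ℝ)) k * poch (α - (x:ℝ) + 1) k))
      = -α * (poch (-(x:ℝ)) k * poch (-(n:ℝ)) k * poch (β + (n:ℝ) - (N:ℝ)) k /
          ((Nat.factorial k : ℝ) * poch (-(N:ℝ)) k * poch (α - (x:ℝ) + 1) k)) := by
    intro k _
    have hk := key α hα x k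
    rw [e3] at hk
    linear_combination (poch (-(n:ℝ)) k * poch (β + (n:ℝ) - (N:ℝ)) k /
        ((Nat.factorial k : ℝ) * poch (-(N:ℝ)) k)) * hk
  have hsum := Finset.sum_congr rfl h
  rw [Finset.sum_sub_distrib, ← Finset.mul_sum, ← Finset.mul_sum, ← Finset.mul_sum] at hsum
  linear_combination ((-1 : ℝ) ^ n * poch (-(N : ℝ)) n / poch (β + 1) n) * hsum
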